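/- arXiv:1608.08436 — 2 statements merged into one kernel-verified Lean document; each statement's English description precedes it below -/
import Mathlib

section
/- Let $(X,\|\cdot\|_X)$ be an $n$-dimensional real Banach space and let $e_1,\dots,e_n$ be a basis with $\|e_i\|_X=1$ for all $i$. Let $(\varepsilon_i)_{i=1}^n$ be independent symmetric $\pm1$ Bernoulli random variables. Then $2^n\big(\mathbb{E}\|\sum_{i=1}^n\varepsilon_i e_i\|_X\big)^{-n}\le \mathrm{vol}_n(B_X)$, where $B_X$ is the unit ball of $X$ and volume is computed with respect to the Lebesgue measure induced by the basis $e_1,\dots,e_n$. -/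
open Finset MeasureTheory
open scoped Pointwise

lemma homog_lintegral_exp (n : ℕ) (g : (Fin n → ℝ) → ℝ) (hg : Measurable g)
    (hg0 : ∀ x, 0 ≤ g x) (hgh : ∀ (c : ℝ) x, 0 < c → g (c • x) = c * g x) :
    ∫⁻ x : Fin n → ℝ, ENNReal.ofReal (Real.exp (-g x)) =
      (∫⁻ t in Set.Ioi (0:ℝ), ENNReal.ofReal (Real.exp (-t) * t ^ n)) *
        volume {x : Fin n → ℝ | g x < 1} := by
  have h1 : ∀ a : ℝ, ∫⁻ t in Set.Ioi a, ENNReal.ofReal (Real.exp (-t)) = ENNReal.ofReal (Real.exp (-a)) := by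
    intro a
    rw [← ofReal_integral_eq_lintegral_ofReal (by have := exp_neg_integrableOn_Ioi a zero_lt_one; simp only [neg_mul, one_mul] at this; exact this)
      (Filter.Eventually.of_forall fun x => (Real.exp_pos _).le), integral_exp_neg_Ioi]
  have hF : Measurable (fun p : (Fin n → ℝ) × ℝ => if g p.1 < p.2 then ENNReal.ofReal (Real.exp (-p.2)) else 0) := by
    refine Measurable.ite ?_ (by fun_prop) measurable_const
    exact measurableSet_lt (hg.comp measurable_fst) measurable_snd
  have step1 : ∫⁻ x : Fin n → ℝ, ENNReal.ofReal (Real.exp (-g x)) =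
      ∫⁻ x : Fin n → ℝ, ∫⁻ t : ℝ, (if g x < t then ENNReal.ofReal (Real.exp (-t)) else 0) := by
    refine lintegral_congr fun x => ?_
    rw [← h1 (g x), ← lintegral_indicator measurableSet_Ioi]
    refine lintegral_congr fun t => ?_
    simp [Set.indicator_apply, Set.mem_Ioi]
  rw [step1, lintegral_lintegral_swap hF.aemeasurable]
  have step2 : ∀ t : ℝ, ∫⁻ x : Fin n → ℝ, (if g x < t then ENNReal.ofReal (Real.exp (-t)) else 0) =
      ENNReal.ofReal (Real.exp (-t)) * volume {x : Fin n → ℝ | g x < t} := by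
    intro t
    rw [← lintegral_indicator_const (by exact measurableSet_lt hg measurable_const) (ENNReal.ofReal (Real.exp (-t)))]
    exact lintegral_congr fun x => by simp [Set.indicator_apply]
  simp_rw [step2]
  have hvanish : ∀ t : ℝ, t ≤ 0 → volume {x : Fin n → ℝ | g x < t} = 0 := by
    intro t ht
    convert measure_empty (μ := (volume : Measure (Fin n → ℝ)))
    exact Set.eq_empty_iff_forall_notMem.2 fun x hx => absurd (lt_of_lt_of_le hx ht) (not_lt.2 (hg0 x))
  have hscale : ∀ t : ℝ, 0 < t → volume {x : Fin n → ℝ | g x < t} =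
      ENNReal.ofReal (t ^ n) * volume {x : Fin n → ℝ | g x < 1} := by
    intro t ht
    have hset : {x : Fin n → ℝ | g x < t} = t • {x : Fin n → ℝ | g x < 1} := by
      ext y
      rw [Set.mem_smul_set_iff_inv_smul_mem₀ ht.ne']
      have : g (t⁻¹ • y) = t⁻¹ * g y := hgh t⁻¹ y (by positivity)
      simp only [Set.mem_setOf_eq, this]
      rw [inv_mul_lt_iff₀ ht, mul_one]
    rw [hset, Measure.addHaar_smul_of_nonneg volume ht.le, Module.finrank_pi, Fintype.card_fin]
  have split : ∫⁻ t : ℝ, ENNReal.ofReal (Real.exp (-t)) * volume {x : Fin n → ℝ | g x < t} =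
      ∫⁻ t in Set.Ioi (0:ℝ), ENNReal.ofReal (Real.exp (-t)) * volume {x : Fin n → ℝ | g x < t} := by
    rw [← lintegral_indicator measurableSet_Ioi]
    refine lintegral_congr fun t => ?_
    rcases le_or_gt t 0 with ht | ht
    · simp [Set.indicator_apply, Set.mem_Ioi, not_lt.2 ht, hvanish t ht]
    · simp [Set.indicator_apply, Set.mem_Ioi, ht]
  rw [split]
  rw [← lintegral_mul_const _ (by fun_prop)]
  refine setLIntegral_congr_fun measurableSet_Ioi (fun t ht => ?_)
  rw [hscale t ht, ENNReal.ofReal_mul (Real.exp_pos _).le, mul_assoc]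

lemma gamma_like_pos (n : ℕ) :
    (∫⁻ t in Set.Ioi (0:ℝ), ENNReal.ofReal (Real.exp (-t) * t ^ n)) ≠ 0 := by
  intro h0
  have hmeas : Measurable fun t : ℝ => ENNReal.ofReal (Real.exp (-t) * t ^ n) := by fun_prop
  rw [lintegral_eq_zero_iff hmeas] at h0
  have h1 : ∀ᵐ t : ℝ, t ∈ Set.Ioi (0:ℝ) → ENNReal.ofReal (Real.exp (-t) * t ^ n) = 0 :=
    (ae_restrict_iff' measurableSet_Ioi).1 h0
  have h2 : volume (Set.Ioi (0:ℝ)) = 0 := by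
    refine measure_mono_null ?_ (ae_iff.1 h1)
    intro t ht
    simp only [Set.mem_setOf_eq, Classical.not_imp]
    refine ⟨ht, ?_⟩
    rw [ENNReal.ofReal_eq_zero, not_le]
    have : (0:ℝ) < t := ht
    positivity
  simp [Real.volume_Ioi] at h2

lemma gamma_like_lt_top (n : ℕ) :
    (∫⁻ t in Set.Ioi (0:ℝ), ENNReal.ofReal (Real.exp (-t) * t ^ n)) ≠ ⊤ := by
  have hint : IntegrableOn (fun t : ℝ => Real.exp (-t) * t ^ n) (Set.Ioi (0:ℝ)) := by
    have := Real.GammaIntegral_convergent (s := n + 1) (by positivity)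
    refine this.congr_fun (fun t ht => ?_) measurableSet_Ioi
    rw [add_sub_cancel_right]; simp only [Real.rpow_natCast]
  rw [← ofReal_integral_eq_lintegral_ofReal hint
    (ae_restrict_of_forall_mem measurableSet_Ioi fun t ht => by
      have : (0:ℝ) < t := ht
      positivity)]
  exact ENNReal.ofReal_ne_top

theorem stmt5 (n : ℕ) (N : (Fin n → ℝ) → ℝ)
    (h_tri : ∀ x y, N (x + y) ≤ N x + N y)
    (h_smul : ∀ (c : ℝ) x, N (c • x) = |c| * N x)
    (h_pos : ∀ x, x ≠ 0 → 0 < N x)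
    (h_unit : ∀ i, N (Pi.single i 1) = 1) :
    ENNReal.ofReal ((2 : ℝ) ^ n *
        (((2 : ℝ) ^ n)⁻¹ * ∑ ε : Fin n → Bool,
          N (∑ i, (if ε i then (1 : ℝ) else -1) • (Pi.single i 1 : Fin n → ℝ)))⁻¹ ^ n) ≤
      volume {x : Fin n → ℝ | N x ≤ 1} := by
  classical
  have hN0 : N 0 = 0 := by simpa using h_smul 0 0
  rcases Nat.eq_zero_or_pos n with hn | hn
  · subst hn
    have huniv : {x : Fin 0 → ℝ | N x ≤ 1} = Set.univ := by
      ext x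
      simp only [Set.mem_setOf_eq, Set.mem_univ, iff_true]
      have hx : x = 0 := Subsingleton.elim _ _
      rw [hx, hN0]; norm_num
    rw [huniv, MeasureTheory.volume_pi, Measure.pi_univ]
    simp
  -- n ≥ 1 from here
  set i0 : Fin n := ⟨0, hn⟩ with hi0
  -- basic norm facts
  have hNneg : ∀ x, 0 ≤ N x := by
    intro x
    rcases eq_or_ne x 0 with h | h
    · rw [h, hN0]
    · exact (h_pos x h).le
  have hsingle : ∀ (c : ℝ) (i : Fin n), c • (Pi.single i 1 : Fin n → ℝ) = Pi.single i c := by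
    intro c i; funext j
    by_cases h : j = i <;> simp [Pi.single_apply, h]
  have hsumN : ∀ (s : Finset (Fin n)) (f : Fin n → (Fin n → ℝ)),
      N (∑ i ∈ s, f i) ≤ ∑ i ∈ s, N (f i) := by
    intro s f
    induction s using Finset.induction_on with
    | empty => simp [hN0]
    | @insert i s hi ih =>
      rw [Finset.sum_insert hi, Finset.sum_insert hi]
      exact (h_tri _ _).trans (by linarith)
  have hNle : ∀ z : Fin n → ℝ, N z ≤ ∑ i, |z i| := by
    intro z
    calc N z = N (∑ i, (z i) • (Pi.single i 1 : Fin n → ℝ)) := by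
          simp_rw [hsingle]; rw [Finset.univ_sum_single]
      _ ≤ ∑ i, N ((z i) • (Pi.single i 1 : Fin n → ℝ)) := hsumN _ _
      _ = ∑ i, |z i| := by simp_rw [h_smul, h_unit, mul_one]
  have habs : ∀ x y : Fin n → ℝ, |N x - N y| ≤ N (x - y) := by
    intro x y
    rw [abs_sub_le_iff]
    constructor
    · have := h_tri (x - y) y
      rw [sub_add_cancel] at this
      linarith
    · have h2 : N (y - x) = N (x - y) := by
        have : y - x = (-1 : ℝ) • (x - y) := by module
        rw [this, h_smul]; norm_num
      have := h_tri (y - x) x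
      rw [sub_add_cancel] at this
      linarith
  have hlip : LipschitzWith (n : NNReal) N := by
    refine LipschitzWith.of_dist_le_mul fun x y => ?_
    rw [Real.dist_eq]
    calc |N x - N y| ≤ N (x - y) := habs x y
      _ ≤ ∑ i, |(x - y) i| := hNle _
      _ ≤ ∑ _i : Fin n, dist x y := by
          refine Finset.sum_le_sum fun i _ => ?_
          have := dist_le_pi_dist x y i
          rwa [Real.dist_eq] at this
      _ = (n : ℝ) * dist x y := by
          rw [Finset.sum_const, Finset.card_univ, Fintype.card_fin, nsmul_eq_mul]
      _ = ((n : NNReal) : ℝ) * dist x y := by norm_num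
  have hmeasN : Measurable N := hlip.continuous.measurable
  -- the sign-flip maps
  set w : (Fin n → Bool) → (Fin n → ℝ) → (Fin n → ℝ) :=
    fun ε x j => (if ε j then (1:ℝ) else -1) * x j with hw
  have hstmt : ∀ ε : Fin n → Bool,
      (∑ i, (if ε i then (1 : ℝ) else -1) • (Pi.single i 1 : Fin n → ℝ)) = w ε (fun _ => 1) := by
    intro ε
    calc (∑ i, (if ε i then (1 : ℝ) else -1) • (Pi.single i 1 : Fin n → ℝ))
        = ∑ i, Pi.single i (if ε i then (1:ℝ) else -1) := by simp_rw [hsingle]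
      _ = fun j => (if ε j then (1:ℝ) else -1) := Finset.univ_sum_single _
      _ = w ε (fun _ => 1) := by funext j; simp [hw]
  set S : (Fin n → ℝ) → ℝ := fun t => ∑ ε : Fin n → Bool, N (w ε t) with hS
  -- pair inequality
  have pair : ∀ (a b : Fin n → ℝ) (r : ℝ), |r| ≤ 1 →
      N (a + r • b) + N (a - r • b) ≤ N (a + b) + N (a - b) := by
    intro a b r hr
    obtain ⟨hr1, hr2⟩ := abs_le.1 hr
    have e1 : a + r • b = ((1+r)/2) • (a+b) + ((1-r)/2) • (a-b) := by module
    have e2 : a - r • b = ((1-r)/2) • (a+b) + ((1+r)/2) • (a-b) := by module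
    have c1 : (0:ℝ) ≤ (1+r)/2 := by linarith
    have c2 : (0:ℝ) ≤ (1-r)/2 := by linarith
    calc N (a + r • b) + N (a - r • b)
        ≤ (N (((1+r)/2) • (a+b)) + N (((1-r)/2) • (a-b)))
          + (N (((1-r)/2) • (a+b)) + N (((1+r)/2) • (a-b))) := by
          rw [e1, e2]; exact add_le_add (h_tri _ _) (h_tri _ _)
      _ = N (a+b) + N (a-b) := by
          rw [h_smul, h_smul, h_smul, h_smul, abs_of_nonneg c1, abs_of_nonneg c2]; ring
  -- monotonicity
  have mono : ∀ (s : Finset (Fin n)) (t : Fin n → ℝ), (∀ i, |t i| ≤ 1) →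
      (∀ i, i ∉ s → t i = 1) → S t ≤ S (fun _ => 1) := by
    intro s
    induction s using Finset.induction_on with
    | empty =>
      intro t h1 h2
      have ht : t = fun _ => 1 := funext fun i => h2 i (Finset.notMem_empty i)
      rw [ht]
    | @insert i s hi ih =>
      intro t h1 h2
      set t' := Function.update t i 1 with ht'
      set fl : (Fin n → Bool) → (Fin n → Bool) := fun ε => Function.update ε i (!ε i) with hfl
      have hfl_inv : ∀ ε, fl (fl ε) = ε := by
        intro ε; funext j
        by_cases h : j = i
        · subst h; simp [hfl]
        · simp [hfl, Function.update_of_ne h]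
      have hsum_fl : ∀ F : (Fin n → Bool) → ℝ, ∑ ε, F (fl ε) = ∑ ε, F ε := by
        intro F
        exact Fintype.sum_bijective fl (Function.Involutive.bijective hfl_inv) _ _ (fun ε => rfl)
      have key : ∀ ε : Fin n → Bool,
          N (w ε t) + N (w (fl ε) t) ≤ N (w ε t') + N (w (fl ε) t') := by
        intro ε
        obtain ⟨a, ha⟩ : ∃ a : Fin n → ℝ,
            a = fun j => if j = i then 0 else (if ε j then (1:ℝ) else -1) * t j := ⟨_, rfl⟩
        obtain ⟨s0, hs0⟩ : ∃ s0 : ℝ, s0 = if ε i then (1:ℝ) else -1 := ⟨_, rfl⟩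
        obtain ⟨r, hr0⟩ : ∃ r : ℝ, r = s0 * t i := ⟨_, rfl⟩
        obtain ⟨b, hb⟩ : ∃ b : Fin n → ℝ, b = (Pi.single i 1 : Fin n → ℝ) := ⟨_, rfl⟩
        have haj : ∀ j, j ≠ i → a j = (if ε j then (1:ℝ) else -1) * t j := by
          intro j h; rw [ha]; simp only [if_neg h]
        have hai : a i = 0 := by rw [ha]; simp
        have hbi : b i = 1 := by rw [hb]; exact Pi.single_eq_same i 1
        have hbj : ∀ j, j ≠ i → b j = 0 := by
          intro j h; rw [hb]; exact Pi.single_eq_of_ne h 1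
        have hfli : ∀ ε' : Fin n → Bool, fl ε' i = !ε' i := by
          intro ε'; simp [hfl]
        have hflj : ∀ (ε' : Fin n → Bool) (j : Fin n), j ≠ i → fl ε' j = ε' j := by
          intro ε' j h; simp [hfl, Function.update_of_ne h]
        have hsflip : (if (!ε i) then (1:ℝ) else -1) = -s0 := by
          cases h' : ε i <;> simp [hs0, h']
        have hw1 : w ε t = a + r • b := by
          funext j
          simp only [hw, Pi.add_apply, Pi.smul_apply, smul_eq_mul]
          by_cases h : j = i
          · subst h; rw [hai, hbi, hr0, hs0]; ring
          · rw [haj j h, hbj j h]; ring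
        have hw2 : w (fl ε) t = a - r • b := by
          funext j
          simp only [hw, Pi.sub_apply, Pi.smul_apply, smul_eq_mul]
          by_cases h : j = i
          · subst h; rw [hfli, hai, hbi, hsflip, hr0]; ring
          · rw [hflj ε j h, haj j h, hbj j h]; ring
        have ht'i : t' i = 1 := by rw [ht']; exact Function.update_self i 1 t
        have ht'j : ∀ j, j ≠ i → t' j = t j := by
          intro j h; rw [ht']; exact Function.update_of_ne h 1 t
        have hw3 : w ε t' = a + s0 • b := by
          funext j
          simp only [hw, Pi.add_apply, Pi.smul_apply, smul_eq_mul]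
          by_cases h : j = i
          · subst h; rw [ht'i, hai, hbi, hs0]; ring
          · rw [ht'j j h, haj j h, hbj j h]; ring
        have hw4 : w (fl ε) t' = a - s0 • b := by
          funext j
          simp only [hw, Pi.sub_apply, Pi.smul_apply, smul_eq_mul]
          by_cases h : j = i
          · subst h; rw [hfli, ht'i, hai, hbi, hsflip]; ring
          · rw [hflj ε j h, ht'j j h, haj j h, hbj j h]; ring
        have hrle : |r| ≤ 1 := by
          rw [hr0, abs_mul]
          have h1s : |s0| = 1 := by cases h' : ε i <;> simp [hs0, h']
          rw [h1s, one_mul]; exact h1 i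
        have hrhs : N (a + s0 • b) + N (a - s0 • b) = N (a + b) + N (a - b) := by
          cases h' : ε i
          · have hs : s0 = -1 := by rw [hs0, h']; simp
            rw [hs]
            have e1 : a + (-1:ℝ) • b = a - b := by module
            have e2 : a - (-1:ℝ) • b = a + b := by module
            rw [e1, e2, add_comm]
          · have hs : s0 = 1 := by rw [hs0, h']; simp
            rw [hs, one_smul]
        rw [hw1, hw2, hw3, hw4, hrhs]
        exact pair a b r hrle
      have h2S : 2 * S t ≤ 2 * S t' := by
        have hsum := Finset.sum_le_sum (fun ε (_ : ε ∈ Finset.univ) => key ε)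
        calc 2 * S t = ∑ ε : Fin n → Bool, (N (w ε t) + N (w (fl ε) t)) := by
              rw [Finset.sum_add_distrib, hsum_fl (fun ε => N (w ε t))]; rw [hS]; ring
          _ ≤ ∑ ε : Fin n → Bool, (N (w ε t') + N (w (fl ε) t')) := hsum
          _ = 2 * S t' := by
              rw [Finset.sum_add_distrib, hsum_fl (fun ε => N (w ε t'))]; rw [hS]; ring
      have h1' : ∀ j, |t' j| ≤ 1 := by
        intro j
        by_cases h : j = i
        · subst h; rw [ht', Function.update_self]; norm_num
        · rw [ht', Function.update_of_ne h]; exact h1 j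
      have h2' : ∀ j, j ∉ s → t' j = 1 := by
        intro j hj
        by_cases h : j = i
        · subst h; rw [ht', Function.update_self]
        · rw [ht', Function.update_of_ne h]
          exact h2 j (by simp [Finset.mem_insert, h, hj])
      exact (by linarith : S t ≤ S t').trans (ih t' h1' h2')
  -- positivity of the mean
  have hw_ne : ∀ ε : Fin n → Bool, w ε (fun _ => 1) ≠ 0 := by
    intro ε h
    have h0 := congrFun h i0
    simp only [hw, Pi.zero_apply, mul_one] at h0
    cases h' : ε i0 <;> rw [h'] at h0 <;> norm_num at h0
  have hS1pos : 0 < S (fun _ => 1) := by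
    rw [hS]
    exact Finset.sum_pos (fun ε _ => h_pos _ (hw_ne ε)) ⟨fun _ => true, Finset.mem_univ _⟩
  set M : ℝ := ((2:ℝ)^n)⁻¹ * S (fun _ => 1) with hM
  have hMpos : 0 < M := by rw [hM]; positivity
  -- averaging bound
  have havg : ∀ x : Fin n → ℝ, ((2:ℝ)^n)⁻¹ * S x ≤ M * ‖x‖ := by
    intro x
    rcases eq_or_ne x 0 with h | h
    · subst h
      have hw0 : ∀ ε : Fin n → Bool, w ε (0 : Fin n → ℝ) = 0 := by
        intro ε; funext j; simp [hw]
      have hS0 : S (0 : Fin n → ℝ) = 0 := by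
        rw [hS]; simp only; rw [Finset.sum_eq_zero]; intro ε _; rw [hw0, hN0]
      rw [hS0, norm_zero]; simp
    · have hc : 0 < ‖x‖ := norm_pos_iff.2 h
      set u : Fin n → ℝ := ‖x‖⁻¹ • x with hu
      have hu1 : ∀ i, |u i| ≤ 1 := by
        intro i
        rw [hu]
        simp only [Pi.smul_apply, smul_eq_mul, abs_mul, abs_inv, abs_norm]
        calc ‖x‖⁻¹ * |x i| ≤ ‖x‖⁻¹ * ‖x‖ := by
              have hxi : |x i| ≤ ‖x‖ := by
                have := norm_le_pi_norm x i
                rwa [Real.norm_eq_abs] at this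
              exact mul_le_mul_of_nonneg_left hxi (inv_nonneg.2 hc.le)
          _ = 1 := inv_mul_cancel₀ hc.ne'
      have hwx : ∀ ε : Fin n → Bool, w ε x = ‖x‖ • w ε u := by
        intro ε; funext j
        simp only [hw, Pi.smul_apply, smul_eq_mul, hu]
        rw [show ‖x‖ * ((if ε j = true then (1:ℝ) else -1) * (‖x‖⁻¹ * x j)) =
          (‖x‖ * ‖x‖⁻¹) * ((if ε j = true then (1:ℝ) else -1) * x j) from by ring,
          mul_inv_cancel₀ hc.ne', one_mul]
      have hSx : S x = ‖x‖ * S u := by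
        rw [hS]; simp only
        rw [Finset.mul_sum]
        refine Finset.sum_congr rfl fun ε _ => ?_
        rw [hwx ε, h_smul, abs_norm]
      have hmono := mono Finset.univ u hu1 (fun i hi => absurd (Finset.mem_univ i) hi)
      have h2p : (0:ℝ) ≤ ((2:ℝ)^n)⁻¹ := by positivity
      calc ((2:ℝ)^n)⁻¹ * S x = ((2:ℝ)^n)⁻¹ * (‖x‖ * S u) := by rw [hSx]
        _ ≤ ((2:ℝ)^n)⁻¹ * (‖x‖ * S (fun _ => 1)) := by
            refine mul_le_mul_of_nonneg_left ?_ h2p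
            exact mul_le_mul_of_nonneg_left hmono hc.le
        _ = M * ‖x‖ := by rw [hM]; ring
  have hcard : Fintype.card (Fin n → Bool) = 2 ^ n := by
    rw [Fintype.card_fun, Fintype.card_bool, Fintype.card_fin]
  -- Jensen
  have hjensen : ∀ x : Fin n → ℝ,
      Real.exp (-(M * ‖x‖)) ≤ ((2:ℝ)^n)⁻¹ * ∑ ε : Fin n → Bool, Real.exp (-(N (w ε x))) := by
    intro x
    have e0 : Real.exp (-(M * ‖x‖)) ≤ Real.exp (-(((2:ℝ)^n)⁻¹ * S x)) :=
      Real.exp_le_exp.2 (neg_le_neg (havg x))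
    have hwsum : ∑ _ε : Fin n → Bool, ((2:ℝ)^n)⁻¹ = 1 := by
      rw [Finset.sum_const, Finset.card_univ, hcard, nsmul_eq_mul]
      push_cast
      rw [mul_inv_cancel₀ (by positivity)]
    have e1 := convexOn_exp.map_sum_le (t := Finset.univ)
      (w := fun _ : Fin n → Bool => ((2:ℝ)^n)⁻¹)
      (p := fun ε : Fin n → Bool => -(N (w ε x)))
      (fun _ _ => by positivity) hwsum (fun _ _ => Set.mem_univ _)
    have e2 : (∑ ε : Fin n → Bool, ((2:ℝ)^n)⁻¹ • (-(N (w ε x)))) = -(((2:ℝ)^n)⁻¹ * S x) := by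
      rw [hS]
      simp only [smul_eq_mul, mul_neg]
      rw [Finset.sum_neg_distrib, ← Finset.mul_sum]
    calc Real.exp (-(M * ‖x‖)) ≤ Real.exp (-(((2:ℝ)^n)⁻¹ * S x)) := e0
      _ = Real.exp (∑ ε : Fin n → Bool, ((2:ℝ)^n)⁻¹ • (-(N (w ε x)))) := by rw [e2]
      _ ≤ ∑ ε : Fin n → Bool, ((2:ℝ)^n)⁻¹ • Real.exp (-(N (w ε x))) := e1
      _ = ((2:ℝ)^n)⁻¹ * ∑ ε : Fin n → Bool, Real.exp (-(N (w ε x))) := by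
          simp only [smul_eq_mul]; rw [← Finset.mul_sum]
  -- measurability helpers
  have hwmeas : ∀ ε : Fin n → Bool, Measurable (w ε) := by
    intro ε
    refine measurable_pi_lambda _ fun j => ?_
    exact (measurable_pi_apply j).const_mul _
  have hball : ∀ ε : Fin n → Bool,
      Measurable fun x : Fin n → ℝ => ENNReal.ofReal (Real.exp (-(N (w ε x)))) := by
    intro ε
    exact ENNReal.measurable_ofReal.comp (((hmeasN.comp (hwmeas ε)).neg).exp)
  -- sign flips preserve volume
  have hint_eq : ∀ ε : Fin n → Bool,
      (∫⁻ x : Fin n → ℝ, ENNReal.ofReal (Real.exp (-(N (w ε x))))) =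
      ∫⁻ x : Fin n → ℝ, ENNReal.ofReal (Real.exp (-(N x))) := by
    intro ε
    have hcomp : ∀ j : Fin n,
        MeasurePreserving (fun a : ℝ => (if ε j then (1:ℝ) else -1) * a) volume volume := by
      intro j
      cases h' : ε j
      · have he : (fun a : ℝ => (if (false : Bool) then (1:ℝ) else -1) * a) = fun a : ℝ => -a := by
          funext a; norm_num
        rw [he]
        exact Measure.measurePreserving_neg _
      · have he : (fun a : ℝ => (if (true : Bool) then (1:ℝ) else -1) * a) = fun a : ℝ => a := by
          funext a; norm_num
        rw [he]
        exact MeasurePreserving.id _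
    have hmp : MeasurePreserving (w ε) volume volume := volume_preserving_pi hcomp
    exact hmp.lintegral_comp (ENNReal.measurable_ofReal.comp ((hmeasN.neg).exp))
  -- comparison of integrals
  have h2p : (0:ℝ) ≤ ((2:ℝ)^n)⁻¹ := by positivity
  have hIle : (∫⁻ x : Fin n → ℝ, ENNReal.ofReal (Real.exp (-(M * ‖x‖)))) ≤
      ∫⁻ x : Fin n → ℝ, ENNReal.ofReal (Real.exp (-(N x))) := by
    calc (∫⁻ x : Fin n → ℝ, ENNReal.ofReal (Real.exp (-(M * ‖x‖))))
        ≤ ∫⁻ x : Fin n → ℝ, ENNReal.ofReal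
            (((2:ℝ)^n)⁻¹ * ∑ ε : Fin n → Bool, Real.exp (-(N (w ε x)))) :=
          lintegral_mono fun x => ENNReal.ofReal_le_ofReal (hjensen x)
      _ = ENNReal.ofReal (((2:ℝ)^n)⁻¹) *
            ∑ ε : Fin n → Bool, ∫⁻ x : Fin n → ℝ, ENNReal.ofReal (Real.exp (-(N (w ε x)))) := by
          simp_rw [ENNReal.ofReal_mul h2p,
            ENNReal.ofReal_sum_of_nonneg (fun ε _ => (Real.exp_pos _).le)]
          rw [lintegral_const_mul _ (Finset.measurable_sum _ (fun ε _ => hball ε)),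
            lintegral_finset_sum _ (fun ε _ => hball ε)]
      _ = ENNReal.ofReal (((2:ℝ)^n)⁻¹) *
            (ENNReal.ofReal ((2:ℝ)^n) * ∫⁻ x : Fin n → ℝ, ENNReal.ofReal (Real.exp (-(N x)))) := by
          simp_rw [hint_eq]
          rw [Finset.sum_const, Finset.card_univ, hcard, nsmul_eq_mul]
          congr 1
          rw [ENNReal.ofReal_pow (by norm_num : (0:ℝ) ≤ 2)]
          norm_num
      _ = ∫⁻ x : Fin n → ℝ, ENNReal.ofReal (Real.exp (-(N x))) := by
          rw [← mul_assoc, ← ENNReal.ofReal_mul h2p,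
            inv_mul_cancel₀ (by positivity : ((2:ℝ)^n) ≠ 0), ENNReal.ofReal_one, one_mul]
  -- apply the homogeneous integral identity
  have hkey1 := homog_lintegral_exp n (fun x => M * ‖x‖)
    (by fun_prop) (fun x => by positivity)
    (fun c x hc => by
      show M * ‖c • x‖ = c * (M * ‖x‖)
      rw [norm_smul, Real.norm_eq_abs, abs_of_pos hc]; ring)
  have hkey2 := homog_lintegral_exp n N hmeasN hNneg
    (fun c x hc => by rw [h_smul, abs_of_pos hc])
  rw [hkey1, hkey2] at hIle
  have hle2 : volume {x : Fin n → ℝ | M * ‖x‖ < 1} ≤ volume {x : Fin n → ℝ | N x < 1} :=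
    (ENNReal.mul_le_mul_iff_right (gamma_like_pos n) (gamma_like_lt_top n)).1 hIle
  have hball_eq : {x : Fin n → ℝ | M * ‖x‖ < 1} = Metric.ball (0 : Fin n → ℝ) M⁻¹ := by
    ext x
    rw [Metric.mem_ball, dist_zero_right]
    simp only [Set.mem_setOf_eq]
    rw [← one_div, lt_div_iff₀ hMpos, mul_comm]
  rw [hball_eq, Real.volume_pi_ball 0 (inv_pos.2 hMpos), Fintype.card_fin] at hle2
  -- conclude
  simp only [hstmt]
  have hMeq : ((2:ℝ)^n)⁻¹ * (∑ ε : Fin n → Bool, N (w ε (fun _ => 1))) = M := rfl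
  rw [hMeq]
  calc ENNReal.ofReal ((2:ℝ)^n * (M⁻¹)^n) = ENNReal.ofReal ((2 * M⁻¹)^n) := by rw [mul_pow]
    _ ≤ volume {x : Fin n → ℝ | N x < 1} := hle2
    _ ≤ volume {x : Fin n → ℝ | N x ≤ 1} := measure_mono fun x hx => (le_of_lt hx : N x ≤ 1)
end

section
/- Let $n\in\mathbb{N}$ and $1\le p,q,r\le\infty$. Then $\|\mathrm{id}:\ell_2^{n^3}\to\ell_p^n\otimes_\pi\ell_q^n\otimes_\pi\ell_r^n\| \le n^{\min(1/r,1/2)}\cdot\|\mathrm{id}:\ell_2^{n^2}\to\ell_p^n\otimes_\pi\ell_q^n\|$. -/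
open Finset
open scoped ENNReal NNReal

/-- The `ℓ_p` norm on `ℝ^n` for an extended real exponent `p`
(with `pnorm ∞ x = max_i |x i|`). -/
noncomputable def pnorm (p : ℝ≥0∞) {n : ℕ} (x : Fin n → ℝ) : ℝ :=
  if p = ∞ then ⨆ i, |x i| else (∑ i, |x i| ^ p.toReal) ^ (1 / p.toReal)

/-- The projective tensor norm on `ℝ^n ⊗ ℝ^n ⊗ ℝ^n ≅ ℝ^{n³}` induced by
`ℓ_p^n, ℓ_q^n, ℓ_r^n`. -/
noncomputable def projNorm3 (p q r : ℝ≥0∞) {n : ℕ} (A : Fin n → Fin n → Fin n → ℝ) : ℝ :=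
  sInf {t : ℝ | ∃ (m : ℕ) (x y z : Fin m → Fin n → ℝ),
    (∀ i j k, A i j k = ∑ s, x s i * y s j * z s k) ∧
    t = ∑ s, pnorm p (x s) * pnorm q (y s) * pnorm r (z s)}

/-- The Euclidean (`ℓ_2^{n³}`) norm of an array. -/
noncomputable def l2norm3 {n : ℕ} (A : Fin n → Fin n → Fin n → ℝ) : ℝ :=
  Real.sqrt (∑ i, ∑ j, ∑ k, (A i j k) ^ 2)

/-- The operator norm of the identity map `ℓ_2^{n³} → ℓ_p^n ⊗_π ℓ_q^n ⊗_π ℓ_r^n`. -/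
noncomputable def idNorm3 (p q r : ℝ≥0∞) (n : ℕ) : ℝ :=
  sSup {t : ℝ | ∃ A : Fin n → Fin n → Fin n → ℝ, l2norm3 A ≤ 1 ∧ t = projNorm3 p q r A}

/-- The projective tensor norm on `ℝ^n ⊗ ℝ^n ≅ ℝ^{n²}` induced by `ℓ_p^n, ℓ_q^n`. -/
noncomputable def projNorm2 (p q : ℝ≥0∞) {n : ℕ} (A : Fin n → Fin n → ℝ) : ℝ :=
  sInf {t : ℝ | ∃ (m : ℕ) (x y : Fin m → Fin n → ℝ),
    (∀ i j, A i j = ∑ s, x s i * y s j) ∧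
    t = ∑ s, pnorm p (x s) * pnorm q (y s)}

/-- The Euclidean (`ℓ_2^{n²}`) norm of a matrix. -/
noncomputable def l2norm2 {n : ℕ} (A : Fin n → Fin n → ℝ) : ℝ :=
  Real.sqrt (∑ i, ∑ j, (A i j) ^ 2)

/-- The operator norm of the identity map `ℓ_2^{n²} → ℓ_p^n ⊗_π ℓ_q^n`. -/
noncomputable def idNorm2 (p q : ℝ≥0∞) (n : ℕ) : ℝ :=
  sSup {t : ℝ | ∃ A : Fin n → Fin n → ℝ, l2norm2 A ≤ 1 ∧ t = projNorm2 p q A}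

lemma pnorm_nonneg (p : ℝ≥0∞) {n : ℕ} (x : Fin n → ℝ) : 0 ≤ pnorm p x := by
  unfold pnorm
  split
  · exact Real.iSup_nonneg fun i => abs_nonneg _
  · exact Real.rpow_nonneg (Finset.sum_nonneg fun i _ => Real.rpow_nonneg (abs_nonneg _) _) _

lemma toReal_pos_of (p : ℝ≥0∞) (hp : 1 ≤ p) (hp' : ¬ p = ∞) : 0 < p.toReal := by
  have : (1:ℝ≥0∞).toReal ≤ p.toReal := ENNReal.toReal_mono hp' hp
  simp at this; linarith

lemma pnorm_smul (p : ℝ≥0∞) (hp : 1 ≤ p) {n : ℕ} (c : ℝ) (x : Fin n → ℝ) :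
    pnorm p (fun i => c * x i) = |c| * pnorm p x := by
  unfold pnorm
  split
  · rw [Real.mul_iSup_of_nonneg (abs_nonneg c)]
    simp_rw [abs_mul]
  · next h =>
    have ht : 0 < p.toReal := toReal_pos_of p hp h
    have : ∀ i : Fin n, |c * x i| ^ p.toReal = |c| ^ p.toReal * |x i| ^ p.toReal := by
      intro i; rw [abs_mul, Real.mul_rpow (abs_nonneg _) (abs_nonneg _)]
    simp_rw [this]
    rw [← Finset.mul_sum, Real.mul_rpow (Real.rpow_nonneg (abs_nonneg _) _)
      (Finset.sum_nonneg fun i _ => Real.rpow_nonneg (abs_nonneg _) _),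
      ← Real.rpow_mul (abs_nonneg c), mul_one_div, div_self ht.ne', Real.rpow_one]

lemma pnorm_single (p : ℝ≥0∞) (hp : 1 ≤ p) {n : ℕ} (a : Fin n) (v : ℝ) :
    pnorm p (fun i => if i = a then v else 0) = |v| := by
  unfold pnorm
  split
  · next h =>
    apply le_antisymm
    · apply Real.iSup_le _ (abs_nonneg v)
      intro i; by_cases hi : i = a <;> simp [hi]
    · have := le_ciSup (Finite.bddAbove_range fun i => |if i = a then v else 0|) a
      simpa using this
  · next h =>
    have ht : 0 < p.toReal := toReal_pos_of p hp h
    have : ∀ i : Fin n, |if i = a then v else 0| ^ p.toReal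
        = if i = a then |v| ^ p.toReal else 0 := by
      intro i; by_cases hi : i = a <;> simp [hi, Real.zero_rpow ht.ne']
    simp_rw [this]
    rw [Finset.sum_ite_eq' Finset.univ a, if_pos (Finset.mem_univ a),
      ← Real.rpow_mul (abs_nonneg v), mul_one_div, div_self ht.ne', Real.rpow_one]

lemma projNorm2_le_of (p q : ℝ≥0∞) {n m : ℕ} (B : Fin n → Fin n → ℝ)
    (x y : Fin m → Fin n → ℝ) (h : ∀ i j, B i j = ∑ s, x s i * y s j) :
    projNorm2 p q B ≤ ∑ s, pnorm p (x s) * pnorm q (y s) := by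
  refine csInf_le ⟨0, ?_⟩ ⟨m, x, y, h, rfl⟩
  rintro t ⟨m', x', y', -, rfl⟩
  exact Finset.sum_nonneg fun s _ => mul_nonneg (pnorm_nonneg _ _) (pnorm_nonneg _ _)

lemma projNorm3_le_of (p q r : ℝ≥0∞) {n m : ℕ} (A : Fin n → Fin n → Fin n → ℝ)
    (x y z : Fin m → Fin n → ℝ) (h : ∀ i j k, A i j k = ∑ s, x s i * y s j * z s k) :
    projNorm3 p q r A ≤ ∑ s, pnorm p (x s) * pnorm q (y s) * pnorm r (z s) := by
  refine csInf_le ⟨0, ?_⟩ ⟨m, x, y, z, h, rfl⟩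
  rintro t ⟨m', x', y', z', -, rfl⟩
  exact Finset.sum_nonneg fun s _ =>
    mul_nonneg (mul_nonneg (pnorm_nonneg _ _) (pnorm_nonneg _ _)) (pnorm_nonneg _ _)

lemma decomp2_exists (p q : ℝ≥0∞) {n : ℕ} (B : Fin n → Fin n → ℝ) :
    Set.Nonempty {t : ℝ | ∃ (m : ℕ) (x y : Fin m → Fin n → ℝ),
      (∀ i j, B i j = ∑ s, x s i * y s j) ∧
      t = ∑ s, pnorm p (x s) * pnorm q (y s)} := by
  refine ⟨_, ⟨n*n,
    fun s i => if i = (finProdFinEquiv.symm s).1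
      then B (finProdFinEquiv.symm s).1 (finProdFinEquiv.symm s).2 else 0,
    fun s j => if j = (finProdFinEquiv.symm s).2 then 1 else 0, ?_, rfl⟩⟩
  intro i j
  rw [← Equiv.sum_comp (finProdFinEquiv (m := n) (n := n))]
  simp only [Equiv.symm_apply_apply]
  rw [Fintype.sum_eq_single (i, j)]
  · simp
  · rintro ⟨a, b⟩ hab
    rcases eq_or_ne i a with rfl | hia
    · rcases eq_or_ne j b with rfl | hjb
      · simp at hab
      · simp [hjb]
    · simp [hia]

lemma decomp3_exists (p q r : ℝ≥0∞) {n : ℕ} (A : Fin n → Fin n → Fin n → ℝ) :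
    Set.Nonempty {t : ℝ | ∃ (m : ℕ) (x y z : Fin m → Fin n → ℝ),
      (∀ i j k, A i j k = ∑ s, x s i * y s j * z s k) ∧
      t = ∑ s, pnorm p (x s) * pnorm q (y s) * pnorm r (z s)} := by
  classical
  let e : (Fin n × Fin n) × Fin n ≃ Fin (n*n*n) :=
    (Equiv.prodCongr finProdFinEquiv (Equiv.refl _)).trans finProdFinEquiv
  refine ⟨_, ⟨n*n*n,
    fun s i => if i = (e.symm s).1.1 then A (e.symm s).1.1 (e.symm s).1.2 (e.symm s).2 else 0,
    fun s j => if j = (e.symm s).1.2 then 1 else 0,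
    fun s k => if k = (e.symm s).2 then 1 else 0, ?_, rfl⟩⟩
  intro i j k
  rw [← Equiv.sum_comp e]
  simp only [Equiv.symm_apply_apply]
  rw [Fintype.sum_eq_single ((i, j), k)]
  · simp
  · rintro ⟨⟨a, b⟩, c⟩ habc
    rcases eq_or_ne i a with rfl | hia
    · rcases eq_or_ne j b with rfl | hjb
      · rcases eq_or_ne k c with rfl | hkc
        · simp at habc
        · simp [hkc]
      · simp [hjb]
    · simp [hia]

lemma projNorm2_nonneg (p q : ℝ≥0∞) {n : ℕ} (B : Fin n → Fin n → ℝ) :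
    0 ≤ projNorm2 p q B := by
  refine le_csInf (decomp2_exists p q B) ?_
  rintro t ⟨m, x, y, -, rfl⟩
  exact Finset.sum_nonneg fun s _ => mul_nonneg (pnorm_nonneg _ _) (pnorm_nonneg _ _)

lemma projNorm3_nonneg (p q r : ℝ≥0∞) {n : ℕ} (A : Fin n → Fin n → Fin n → ℝ) :
    0 ≤ projNorm3 p q r A := by
  refine le_csInf (decomp3_exists p q r A) ?_
  rintro t ⟨m, x, y, z, -, rfl⟩
  exact Finset.sum_nonneg fun s _ =>
    mul_nonneg (mul_nonneg (pnorm_nonneg _ _) (pnorm_nonneg _ _)) (pnorm_nonneg _ _)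

lemma exists_decomp2 (p q : ℝ≥0∞) {n : ℕ} (B : Fin n → Fin n → ℝ) {ε : ℝ} (hε : 0 < ε) :
    ∃ (m : ℕ) (x y : Fin m → Fin n → ℝ), (∀ i j, B i j = ∑ s, x s i * y s j) ∧
      ∑ s, pnorm p (x s) * pnorm q (y s) < projNorm2 p q B + ε := by
  obtain ⟨t, ⟨m, x, y, hxy, rfl⟩, hlt⟩ := Real.lt_sInf_add_pos (decomp2_exists p q B) hε
  exact ⟨m, x, y, hxy, hlt⟩

lemma exists_decomp3 (p q r : ℝ≥0∞) {n : ℕ} (A : Fin n → Fin n → Fin n → ℝ) {ε : ℝ}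
    (hε : 0 < ε) :
    ∃ (m : ℕ) (x y z : Fin m → Fin n → ℝ), (∀ i j k, A i j k = ∑ s, x s i * y s j * z s k) ∧
      ∑ s, pnorm p (x s) * pnorm q (y s) * pnorm r (z s) < projNorm3 p q r A + ε := by
  obtain ⟨t, ⟨m, x, y, z, hxyz, rfl⟩, hlt⟩ := Real.lt_sInf_add_pos (decomp3_exists p q r A) hε
  exact ⟨m, x, y, z, hxyz, hlt⟩

lemma projNorm2_zero (p q : ℝ≥0∞) {n : ℕ} :
    projNorm2 p q (fun (_ _ : Fin n) => (0:ℝ)) = 0 := by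
  refine le_antisymm ?_ (projNorm2_nonneg p q _)
  have := projNorm2_le_of p q (fun (_ _ : Fin n) => (0:ℝ)) (fun s : Fin 0 => s.elim0)
    (fun s : Fin 0 => s.elim0) (by simp)
  simpa using this

lemma projNorm3_zero (p q r : ℝ≥0∞) {n : ℕ} :
    projNorm3 p q r (fun (_ _ _ : Fin n) => (0:ℝ)) = 0 := by
  refine le_antisymm ?_ (projNorm3_nonneg p q r _)
  have := projNorm3_le_of p q r (fun (_ _ _ : Fin n) => (0:ℝ)) (fun s : Fin 0 => s.elim0)
    (fun s : Fin 0 => s.elim0) (fun s : Fin 0 => s.elim0) (by simp)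
  simpa using this

lemma projNorm3_add (p q r : ℝ≥0∞) {n : ℕ} (A B : Fin n → Fin n → Fin n → ℝ) :
    projNorm3 p q r (fun i j k => A i j k + B i j k)
      ≤ projNorm3 p q r A + projNorm3 p q r B := by
  refine le_of_forall_pos_le_add fun ε hε => ?_
  obtain ⟨m₁, x₁, y₁, z₁, h₁, v₁⟩ := exists_decomp3 p q r A (half_pos hε)
  obtain ⟨m₂, x₂, y₂, z₂, h₂, v₂⟩ := exists_decomp3 p q r B (half_pos hε)
  have hle := projNorm3_le_of p q r (fun i j k => A i j k + B i j k)
    (Fin.append x₁ x₂) (Fin.append y₁ y₂) (Fin.append z₁ z₂) ?_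
  · rw [Fin.sum_univ_add] at hle
    simp only [Fin.append_left, Fin.append_right] at hle
    calc projNorm3 p q r (fun i j k => A i j k + B i j k)
        ≤ _ := hle
      _ ≤ (projNorm3 p q r A + ε/2) + (projNorm3 p q r B + ε/2) := by
          exact add_le_add v₁.le v₂.le
      _ ≤ projNorm3 p q r A + projNorm3 p q r B + ε := by linarith
  · intro i j k
    rw [Fin.sum_univ_add]
    simp only [Fin.append_left, Fin.append_right]
    rw [← h₁ i j k, ← h₂ i j k]

lemma projNorm3_sum_le (p q r : ℝ≥0∞) {n : ℕ} {ι : Type*} (t : Finset ι)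
    (F : ι → Fin n → Fin n → Fin n → ℝ) :
    projNorm3 p q r (fun i j k => ∑ s ∈ t, F s i j k) ≤ ∑ s ∈ t, projNorm3 p q r (F s) := by
  classical
  induction t using Finset.induction with
  | empty => simpa using (projNorm3_zero p q r (n := n)).le
  | @insert a t ha ih =>
    rw [Finset.sum_insert ha]
    have h1 : projNorm3 p q r (fun i j k => ∑ s ∈ insert a t, F s i j k)
        ≤ projNorm3 p q r (F a) + projNorm3 p q r (fun i j k => ∑ s ∈ t, F s i j k) := by
      have := projNorm3_add p q r (F a) (fun i j k => ∑ s ∈ t, F s i j k)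
      simpa [Finset.sum_insert ha] using this
    exact h1.trans (add_le_add le_rfl ih)

lemma projNorm3_tensor_le (p q r : ℝ≥0∞) {n : ℕ} (B : Fin n → Fin n → ℝ) (z : Fin n → ℝ) :
    projNorm3 p q r (fun i j k => B i j * z k) ≤ projNorm2 p q B * pnorm r z := by
  refine le_of_forall_pos_le_add fun ε hε => ?_
  have hz := pnorm_nonneg r z
  have hδ : 0 < ε / (pnorm r z + 1) := div_pos hε (by linarith)
  obtain ⟨m, x, y, hxy, hv⟩ := exists_decomp2 p q B hδ
  have h1 : projNorm3 p q r (fun i j k => B i j * z k)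
      ≤ ∑ s, pnorm p (x s) * pnorm q (y s) * pnorm r z :=
    projNorm3_le_of p q r _ x y (fun _ => z)
      (fun i j k => by rw [hxy i j, Finset.sum_mul])
  rw [← Finset.sum_mul] at h1
  have h2 : (∑ s, pnorm p (x s) * pnorm q (y s)) * pnorm r z
      ≤ (projNorm2 p q B + ε / (pnorm r z + 1)) * pnorm r z :=
    mul_le_mul_of_nonneg_right hv.le hz
  have h3 : (projNorm2 p q B + ε / (pnorm r z + 1)) * pnorm r z
      ≤ projNorm2 p q B * pnorm r z + ε := by
    have hle : ε / (pnorm r z + 1) * pnorm r z ≤ ε := by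
      rw [div_mul_eq_mul_div, div_le_iff₀ (by linarith)]
      nlinarith
    nlinarith [hle]
  linarith

lemma projNorm2_smul_le (p q : ℝ≥0∞) (hp : 1 ≤ p) (hq : 1 ≤ q) {n : ℕ} (c : ℝ) (hc : 0 ≤ c)
    (B : Fin n → Fin n → ℝ) :
    projNorm2 p q (fun i j => c * B i j) ≤ c * projNorm2 p q B := by
  refine le_of_forall_pos_le_add fun ε hε => ?_
  have hδ : 0 < ε / (c + 1) := div_pos hε (by linarith)
  obtain ⟨m, x, y, hxy, hv⟩ := exists_decomp2 p q B hδ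
  have h1 : projNorm2 p q (fun i j => c * B i j)
      ≤ ∑ s, pnorm p (fun i => c * x s i) * pnorm q (y s) := by
    refine projNorm2_le_of p q _ (fun s i => c * x s i) y fun i j => ?_
    rw [hxy i j, Finset.mul_sum]
    exact Finset.sum_congr rfl fun s _ => by ring
  have h2 : ∑ s, pnorm p (fun i => c * x s i) * pnorm q (y s)
      = c * ∑ s, pnorm p (x s) * pnorm q (y s) := by
    rw [Finset.mul_sum]
    refine Finset.sum_congr rfl fun s _ => ?_
    rw [pnorm_smul p hp c (x s), abs_of_nonneg hc]; ring
  have h3 : c * ∑ s, pnorm p (x s) * pnorm q (y s)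
      ≤ c * (projNorm2 p q B + ε / (c + 1)) := mul_le_mul_of_nonneg_left hv.le hc
  have h4 : c * (projNorm2 p q B + ε / (c + 1)) ≤ c * projNorm2 p q B + ε := by
    have : c * (ε / (c + 1)) ≤ ε := by
      rw [← mul_div_assoc, div_le_iff₀ (by linarith : (0:ℝ) < c + 1)]
      nlinarith
    nlinarith
  linarith [h1.trans_eq h2]

lemma l2norm2_sq {n : ℕ} (B : Fin n → Fin n → ℝ) :
    (l2norm2 B) ^ 2 = ∑ i, ∑ j, (B i j) ^ 2 :=
  Real.sq_sqrt (Finset.sum_nonneg fun i _ => Finset.sum_nonneg fun j _ => sq_nonneg _)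

lemma l2norm3_sq {n : ℕ} (A : Fin n → Fin n → Fin n → ℝ) :
    (l2norm3 A) ^ 2 = ∑ i, ∑ j, ∑ k, (A i j k) ^ 2 :=
  Real.sq_sqrt (Finset.sum_nonneg fun i _ => Finset.sum_nonneg fun j _ =>
    Finset.sum_nonneg fun k _ => sq_nonneg _)

lemma projNorm2_le_sum_abs (p q : ℝ≥0∞) (hp : 1 ≤ p) (hq : 1 ≤ q) {n : ℕ}
    (B : Fin n → Fin n → ℝ) :
    projNorm2 p q B ≤ ∑ i, ∑ j, |B i j| := by
  classical
  have hle := projNorm2_le_of p q B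
    (fun s i => if i = (finProdFinEquiv.symm s).1
      then B (finProdFinEquiv.symm s).1 (finProdFinEquiv.symm s).2 else 0)
    (fun s j => if j = (finProdFinEquiv.symm s).2 then 1 else 0) ?_
  · refine hle.trans ?_
    rw [← Equiv.sum_comp (finProdFinEquiv (m := n) (n := n))]
    simp only [Equiv.symm_apply_apply]
    rw [Fintype.sum_prod_type]
    refine le_of_eq (Finset.sum_congr rfl fun a _ => Finset.sum_congr rfl fun b _ => ?_)
    rw [pnorm_single p hp, pnorm_single q hq]
    simp
  · intro i j
    rw [← Equiv.sum_comp (finProdFinEquiv (m := n) (n := n))]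
    simp only [Equiv.symm_apply_apply]
    rw [Fintype.sum_eq_single (i, j)]
    · simp
    · rintro ⟨a, b⟩ hab
      rcases eq_or_ne i a with rfl | hia
      · rcases eq_or_ne j b with rfl | hjb
        · simp at hab
        · simp [hjb]
      · simp [hia]

lemma sum_abs_le_card_l2 {n : ℕ} (B : Fin n → Fin n → ℝ) :
    ∑ i, ∑ j, |B i j| ≤ (n : ℝ) * l2norm2 B := by
  classical
  have h1 : (∑ i, ∑ j, |B i j|) ^ 2 ≤ (n * n : ℝ) * ∑ i, ∑ j, (B i j) ^ 2 := by
    have := sq_sum_le_card_mul_sum_sq (s := (Finset.univ : Finset (Fin n × Fin n)))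
      (f := fun ab => |B ab.1 ab.2|)
    simp only [Finset.card_univ, Fintype.card_prod, Fintype.card_fin] at this
    calc (∑ i, ∑ j, |B i j|) ^ 2 = (∑ ab : Fin n × Fin n, |B ab.1 ab.2|) ^ 2 := by
          rw [Fintype.sum_prod_type]
      _ ≤ (n * n : ℕ) * ∑ ab : Fin n × Fin n, |B ab.1 ab.2| ^ 2 := by exact_mod_cast this
      _ = (n * n : ℝ) * ∑ i, ∑ j, (B i j) ^ 2 := by
          rw [Fintype.sum_prod_type]
          push_cast
          simp [sq_abs]
  have h2 : (0:ℝ) ≤ ∑ i, ∑ j, |B i j| :=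
    Finset.sum_nonneg fun i _ => Finset.sum_nonneg fun j _ => abs_nonneg _
  have h3 : (0:ℝ) ≤ (n : ℝ) * l2norm2 B :=
    mul_nonneg (Nat.cast_nonneg n) (Real.sqrt_nonneg _)
  nlinarith [l2norm2_sq B, Real.sqrt_nonneg (∑ i, ∑ j, (B i j) ^ 2), h1, h2, h3,
    sq_nonneg ((∑ i, ∑ j, |B i j|) - (n:ℝ) * l2norm2 B)]

lemma idNorm2_bddAbove (p q : ℝ≥0∞) (hp : 1 ≤ p) (hq : 1 ≤ q) (n : ℕ) :
    BddAbove {t : ℝ | ∃ A : Fin n → Fin n → ℝ, l2norm2 A ≤ 1 ∧ t = projNorm2 p q A} := by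
  refine ⟨n, ?_⟩
  rintro t ⟨A, hA, rfl⟩
  calc projNorm2 p q A ≤ ∑ i, ∑ j, |A i j| := projNorm2_le_sum_abs p q hp hq A
    _ ≤ (n : ℝ) * l2norm2 A := sum_abs_le_card_l2 A
    _ ≤ (n : ℝ) * 1 := mul_le_mul_of_nonneg_left hA (Nat.cast_nonneg n)
    _ = n := mul_one _

lemma idNorm2_nonneg (p q : ℝ≥0∞) (hp : 1 ≤ p) (hq : 1 ≤ q) (n : ℕ) :
    0 ≤ idNorm2 p q n := by
  have hmem : (0:ℝ) ∈ {t : ℝ | ∃ A : Fin n → Fin n → ℝ, l2norm2 A ≤ 1 ∧ t = projNorm2 p q A} :=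
    ⟨fun _ _ => 0, by simp [l2norm2], (projNorm2_zero p q).symm⟩
  exact le_csSup (idNorm2_bddAbove p q hp hq n) hmem

lemma l2norm2_smul {n : ℕ} (c : ℝ) (B : Fin n → Fin n → ℝ) :
    l2norm2 (fun i j => c * B i j) = |c| * l2norm2 B := by
  unfold l2norm2
  rw [← Real.sqrt_sq_eq_abs, ← Real.sqrt_mul (sq_nonneg c)]
  congr 1
  rw [Finset.mul_sum]
  refine Finset.sum_congr rfl fun i _ => ?_
  rw [Finset.mul_sum]
  exact Finset.sum_congr rfl fun j _ => by ring

lemma projNorm2_le_idNorm2 (p q : ℝ≥0∞) (hp : 1 ≤ p) (hq : 1 ≤ q) {n : ℕ}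
    (B : Fin n → Fin n → ℝ) :
    projNorm2 p q B ≤ idNorm2 p q n * l2norm2 B := by
  have hnn : (0:ℝ) ≤ l2norm2 B := by unfold l2norm2; positivity
  rcases eq_or_lt_of_le hnn with h0 | hpos
  · have hsum : ∑ i, ∑ j, (B i j)^2 = 0 := by
      have := l2norm2_sq B
      rw [← h0] at this
      simpa using this.symm
    have hB : ∀ i j, B i j = 0 := by
      intro i j
      have h1 := (Finset.sum_eq_zero_iff_of_nonneg
        (fun i _ => Finset.sum_nonneg fun j _ => sq_nonneg (B i j))).1 hsum i (Finset.mem_univ i)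
      have h2 := (Finset.sum_eq_zero_iff_of_nonneg (fun j _ => sq_nonneg (B i j))).1 h1 j
        (Finset.mem_univ j)
      exact pow_eq_zero_iff two_ne_zero |>.1 h2
    have hBeq : B = fun _ _ => (0:ℝ) := funext fun i => funext fun j => hB i j
    rw [hBeq, projNorm2_zero p q]
    have h00 : l2norm2 (fun (_ _ : Fin n) => (0:ℝ)) = 0 := by simp [l2norm2]
    simp [h00]
  · set c := l2norm2 B with hc
    have hc0 : c ≠ 0 := hpos.ne'
    have hB' : l2norm2 (fun i j => c⁻¹ * B i j) ≤ 1 := by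
      rw [l2norm2_smul, abs_of_nonneg (inv_nonneg.2 hpos.le), ← hc, inv_mul_cancel₀ hc0]
    have hmem : projNorm2 p q (fun i j => c⁻¹ * B i j)
        ∈ {t : ℝ | ∃ A : Fin n → Fin n → ℝ, l2norm2 A ≤ 1 ∧ t = projNorm2 p q A} :=
      ⟨_, hB', rfl⟩
    have h1 : projNorm2 p q (fun i j => c⁻¹ * B i j) ≤ idNorm2 p q n :=
      le_csSup (idNorm2_bddAbove p q hp hq n) hmem
    have h2 : projNorm2 p q B ≤ c * projNorm2 p q (fun i j => c⁻¹ * B i j) := by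
      have heq : B = fun i j => c * (c⁻¹ * B i j) := by
        funext i j; rw [← mul_assoc, mul_inv_cancel₀ hc0, one_mul]
      calc projNorm2 p q B = projNorm2 p q (fun i j => c * (c⁻¹ * B i j)) := by rw [← heq]
        _ ≤ c * projNorm2 p q (fun i j => c⁻¹ * B i j) :=
            projNorm2_smul_le p q hp hq c hpos.le _
    calc projNorm2 p q B ≤ c * projNorm2 p q (fun i j => c⁻¹ * B i j) := h2
      _ ≤ c * idNorm2 p q n := mul_le_mul_of_nonneg_left h1 hpos.le
      _ = idNorm2 p q n * l2norm2 B := by rw [mul_comm, hc]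

lemma sum_l2slice_le {n : ℕ} (A : Fin n → Fin n → Fin n → ℝ) :
    ∑ k, l2norm2 (fun i j => A i j k) ≤ Real.sqrt n * l2norm3 A := by
  classical
  have hsq : ∑ k, (l2norm2 (fun i j => A i j k)) ^ 2 = (l2norm3 A) ^ 2 := by
    rw [l2norm3_sq]
    simp_rw [l2norm2_sq]
    rw [Finset.sum_comm]
    exact Finset.sum_congr rfl fun i _ => Finset.sum_comm
  have h1 : (∑ k, l2norm2 (fun i j => A i j k)) ^ 2 ≤ (n:ℝ) * (l2norm3 A) ^ 2 := by
    have := sq_sum_le_card_mul_sum_sq (s := (Finset.univ : Finset (Fin n)))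
      (f := fun k => l2norm2 (fun i j => A i j k))
    rw [hsq] at this
    simpa using this
  have h2 : (0:ℝ) ≤ ∑ k, l2norm2 (fun i j => A i j k) :=
    Finset.sum_nonneg fun k _ => Real.sqrt_nonneg _
  have h3 : (0:ℝ) ≤ Real.sqrt n * l2norm3 A :=
    mul_nonneg (Real.sqrt_nonneg _) (Real.sqrt_nonneg _)
  nlinarith [Real.sq_sqrt (Nat.cast_nonneg n : (0:ℝ) ≤ n), h1, h2, h3]

lemma key_half (p q r : ℝ≥0∞) (hp : 1 ≤ p) (hq : 1 ≤ q) (hr : 1 ≤ r) {n : ℕ}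
    (A : Fin n → Fin n → Fin n → ℝ) :
    projNorm3 p q r A ≤ Real.sqrt n * (idNorm2 p q n * l2norm3 A) := by
  classical
  have hD := idNorm2_nonneg p q hp hq n
  have repr : A = fun i j k => ∑ k', A i j k' * (if k = k' then (1:ℝ) else 0) := by
    funext i j k
    rw [Finset.sum_eq_single k]
    · simp
    · intro b _ hbk
      simp [Ne.symm hbk]
    · simp
  calc projNorm3 p q r A
      = projNorm3 p q r (fun i j k => ∑ k', A i j k' * (if k = k' then (1:ℝ) else 0)) := by
        rw [← repr]
    _ ≤ ∑ k', projNorm3 p q r (fun i j k => A i j k' * (if k = k' then (1:ℝ) else 0)) :=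
        projNorm3_sum_le p q r Finset.univ _
    _ ≤ ∑ k', projNorm2 p q (fun i j => A i j k') * pnorm r (fun k => if k = k' then (1:ℝ) else 0) :=
        Finset.sum_le_sum fun k' _ => projNorm3_tensor_le p q r _ _
    _ = ∑ k', projNorm2 p q (fun i j => A i j k') := by
        refine Finset.sum_congr rfl fun k' _ => ?_
        rw [pnorm_single r hr k' 1]
        simp
    _ ≤ ∑ k', idNorm2 p q n * l2norm2 (fun i j => A i j k') :=
        Finset.sum_le_sum fun k' _ => projNorm2_le_idNorm2 p q hp hq _
    _ = idNorm2 p q n * ∑ k', l2norm2 (fun i j => A i j k') := by rw [Finset.mul_sum]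
    _ ≤ idNorm2 p q n * (Real.sqrt n * l2norm3 A) :=
        mul_le_mul_of_nonneg_left (sum_l2slice_le A) hD
    _ = Real.sqrt n * (idNorm2 p q n * l2norm3 A) := by ring

lemma sgn_orth {n : ℕ} (k k' : Fin n) :
    ∑ ε : Fin n → Bool, (if ε k then (1:ℝ) else -1) * (if ε k' then (1:ℝ) else -1)
      = if k = k' then (2:ℝ)^n else 0 := by
  classical
  rcases eq_or_ne k k' with rfl | h
  · rw [if_pos rfl]
    have : ∀ ε : Fin n → Bool, (if ε k then (1:ℝ) else -1) * (if ε k then (1:ℝ) else -1) = 1 := by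
      intro ε; cases hb : ε k <;> simp [hb]
    rw [Finset.sum_congr rfl fun ε _ => this ε, Finset.sum_const, Finset.card_univ]
    simp [Fintype.card_fun]
  · rw [if_neg h]
    refine Finset.sum_ninvolution (fun ε => Function.update ε k (!(ε k))) ?_ ?_
      (fun ε => Finset.mem_univ _) ?_
    · intro ε
      simp only [Function.update_self, Function.update_of_ne (Ne.symm h)]
      cases hb : ε k <;> cases hb' : ε k' <;> simp [hb, hb']
    · intro ε _ hEq
      have h3 := congrFun hEq k
      simp only [Function.update_self] at h3
      exact Bool.not_ne_self (ε k) h3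
    · intro ε
      funext l
      rcases eq_or_ne l k with rfl | hl
      · simp
      · simp [Function.update_of_ne hl]

lemma pnorm_sign (r : ℝ≥0∞) (hr : 1 ≤ r) {n : ℕ} (hn : 0 < n) (ε : Fin n → Bool) :
    pnorm r (fun k => if ε k then (1:ℝ) else -1) = (n:ℝ) ^ ((1/r).toReal) := by
  have : Nonempty (Fin n) := Fin.pos_iff_nonempty.1 hn
  have habs : ∀ k, |if ε k then (1:ℝ) else -1| = 1 := by
    intro k; cases hb : ε k <;> simp [hb]
  unfold pnorm
  split
  · next h =>
    subst h
    simp only [habs]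
    rw [ciSup_const]
    simp
  · next h =>
    have ht : 0 < r.toReal := toReal_pos_of r hr h
    have h1 : ∀ k : Fin n, |if ε k then (1:ℝ) else -1| ^ r.toReal = 1 := by
      intro k; rw [habs k, Real.one_rpow]
    simp only [h1]
    rw [Finset.sum_const, Finset.card_univ, Fintype.card_fin]
    have h2 : (1/r).toReal = 1 / r.toReal := by
      rw [one_div, one_div, ENNReal.toReal_inv]
    rw [h2]
    simp

lemma zz_sum {n : ℕ} (A : Fin n → Fin n → Fin n → ℝ) (i j : Fin n) (k : Fin n) :
    ∑ ε : Fin n → Bool, (∑ k', (if ε k' then (1:ℝ) else -1) * A i j k')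
        * (if ε k then (1:ℝ) else -1)
      = (2:ℝ)^n * A i j k := by
  classical
  calc ∑ ε : Fin n → Bool, (∑ k', (if ε k' then (1:ℝ) else -1) * A i j k')
        * (if ε k then (1:ℝ) else -1)
      = ∑ ε : Fin n → Bool, ∑ k',
          ((if ε k' then (1:ℝ) else -1) * (if ε k then (1:ℝ) else -1)) * A i j k' := by
        refine Finset.sum_congr rfl fun ε _ => ?_
        rw [Finset.sum_mul]
        exact Finset.sum_congr rfl fun k' _ => by ring
    _ = ∑ k', (∑ ε : Fin n → Bool,
          (if ε k' then (1:ℝ) else -1) * (if ε k then (1:ℝ) else -1)) * A i j k' := by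
        rw [Finset.sum_comm]
        exact Finset.sum_congr rfl fun k' _ => (Finset.sum_mul _ _ _).symm
    _ = ∑ k', (if k' = k then (2:ℝ)^n else 0) * A i j k' := by
        refine Finset.sum_congr rfl fun k' _ => ?_
        rw [sgn_orth k' k]
    _ = (2:ℝ)^n * A i j k := by
        rw [Finset.sum_eq_single k]
        · simp
        · intro b _ hbk; simp [hbk]
        · simp

lemma zz_sq_sum {n : ℕ} (A : Fin n → Fin n → Fin n → ℝ) (i j : Fin n) :
    ∑ ε : Fin n → Bool, (∑ k, (if ε k then (1:ℝ) else -1) * A i j k) ^ 2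
      = (2:ℝ)^n * ∑ k, (A i j k)^2 := by
  classical
  calc ∑ ε : Fin n → Bool, (∑ k, (if ε k then (1:ℝ) else -1) * A i j k) ^ 2
      = ∑ ε : Fin n → Bool, ∑ k, ∑ k',
          ((if ε k then (1:ℝ) else -1) * (if ε k' then (1:ℝ) else -1)) * (A i j k * A i j k') := by
        refine Finset.sum_congr rfl fun ε _ => ?_
        rw [sq, Finset.sum_mul_sum]
        exact Finset.sum_congr rfl fun k _ => Finset.sum_congr rfl fun k' _ => by ring
    _ = ∑ k, ∑ k', (∑ ε : Fin n → Bool,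
          (if ε k then (1:ℝ) else -1) * (if ε k' then (1:ℝ) else -1)) * (A i j k * A i j k') := by
        rw [Finset.sum_comm]
        refine Finset.sum_congr rfl fun k _ => ?_
        rw [Finset.sum_comm]
        exact Finset.sum_congr rfl fun k' _ => (Finset.sum_mul _ _ _).symm
    _ = ∑ k, ∑ k', (if k = k' then (2:ℝ)^n else 0) * (A i j k * A i j k') := by
        exact Finset.sum_congr rfl fun k _ => Finset.sum_congr rfl fun k' _ => by rw [sgn_orth]
    _ = (2:ℝ)^n * ∑ k, (A i j k)^2 := by
        rw [Finset.mul_sum]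
        refine Finset.sum_congr rfl fun k _ => ?_
        rw [Finset.sum_eq_single k]
        · simp [sq]
        · intro b _ hbk; simp [Ne.symm hbk]
        · simp

lemma key_r (p q r : ℝ≥0∞) (hp : 1 ≤ p) (hq : 1 ≤ q) (hr : 1 ≤ r) {n : ℕ} (hn : 0 < n)
    (A : Fin n → Fin n → Fin n → ℝ) :
    projNorm3 p q r A ≤ (n:ℝ) ^ ((1/r).toReal) * (idNorm2 p q n * l2norm3 A) := by
  classical
  have hD := idNorm2_nonneg p q hp hq n
  have hNpos : (0:ℝ) < (2:ℝ)^n := by positivity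
  set M : (Fin n → Bool) → Fin n → Fin n → ℝ :=
    fun ε i j => ((2:ℝ)^n)⁻¹ * ∑ k, (if ε k then (1:ℝ) else -1) * A i j k with hMdef
  have repr : A = fun i j k => ∑ ε : Fin n → Bool, M ε i j * (if ε k then (1:ℝ) else -1) := by
    funext i j k
    rw [hMdef]
    simp only
    calc A i j k = ((2:ℝ)^n)⁻¹ * ((2:ℝ)^n * A i j k) := by
          field_simp
      _ = ∑ ε : Fin n → Bool, (((2:ℝ)^n)⁻¹ * ∑ k', (if ε k' then (1:ℝ) else -1) * A i j k')
            * (if ε k then (1:ℝ) else -1) := by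
          rw [← zz_sum A i j k, Finset.mul_sum]
          exact Finset.sum_congr rfl fun ε _ => by ring
  -- sum of squares of M
  have hMsq : ∑ ε : Fin n → Bool, (l2norm2 (M ε))^2 = ((2:ℝ)^n)⁻¹ * (l2norm3 A)^2 := by
    calc ∑ ε : Fin n → Bool, (l2norm2 (M ε))^2
        = ∑ ε : Fin n → Bool, ∑ i, ∑ j, (M ε i j)^2 := by
          exact Finset.sum_congr rfl fun ε _ => l2norm2_sq (M ε)
      _ = ∑ i, ∑ j, ∑ ε : Fin n → Bool, (M ε i j)^2 := by
          rw [Finset.sum_comm]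
          exact Finset.sum_congr rfl fun i _ => Finset.sum_comm
      _ = ∑ i, ∑ j, (((2:ℝ)^n)⁻¹)^2 * ((2:ℝ)^n * ∑ k, (A i j k)^2) := by
          refine Finset.sum_congr rfl fun i _ => Finset.sum_congr rfl fun j _ => ?_
          rw [← zz_sq_sum A i j, Finset.mul_sum]
          exact Finset.sum_congr rfl fun ε _ => by rw [hMdef]; ring
      _ = ((2:ℝ)^n)⁻¹ * (l2norm3 A)^2 := by
          rw [l2norm3_sq, Finset.mul_sum]
          refine Finset.sum_congr rfl fun i _ => ?_
          rw [Finset.mul_sum]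
          refine Finset.sum_congr rfl fun j _ => ?_
          field_simp
  -- sum of l2 norms of M
  have hMl2 : ∑ ε : Fin n → Bool, l2norm2 (M ε) ≤ l2norm3 A := by
    have hcs := sq_sum_le_card_mul_sum_sq (s := (Finset.univ : Finset (Fin n → Bool)))
      (f := fun ε => l2norm2 (M ε))
    rw [hMsq] at hcs
    have hcard : ((Finset.univ : Finset (Fin n → Bool)).card : ℝ) = (2:ℝ)^n := by
      rw [Finset.card_univ]
      simp [Fintype.card_fun]
    rw [hcard] at hcs
    have h1 : (∑ ε : Fin n → Bool, l2norm2 (M ε))^2 ≤ (l2norm3 A)^2 := by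
      calc (∑ ε : Fin n → Bool, l2norm2 (M ε))^2
          ≤ (2:ℝ)^n * (((2:ℝ)^n)⁻¹ * (l2norm3 A)^2) := hcs
        _ = (l2norm3 A)^2 := by field_simp
    have h2 : (0:ℝ) ≤ ∑ ε : Fin n → Bool, l2norm2 (M ε) :=
      Finset.sum_nonneg fun ε _ => Real.sqrt_nonneg _
    have h3 : (0:ℝ) ≤ l2norm3 A := Real.sqrt_nonneg _
    nlinarith
  -- main chain
  have hpow : (0:ℝ) ≤ (n:ℝ) ^ ((1/r).toReal) := Real.rpow_nonneg (Nat.cast_nonneg n) _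
  calc projNorm3 p q r A
      = projNorm3 p q r
          (fun i j k => ∑ ε : Fin n → Bool, M ε i j * (if ε k then (1:ℝ) else -1)) := by
        rw [← repr]
    _ ≤ ∑ ε : Fin n → Bool,
          projNorm3 p q r (fun i j k => M ε i j * (if ε k then (1:ℝ) else -1)) :=
        projNorm3_sum_le p q r Finset.univ _
    _ ≤ ∑ ε : Fin n → Bool,
          projNorm2 p q (M ε) * pnorm r (fun k => if ε k then (1:ℝ) else -1) :=
        Finset.sum_le_sum fun ε _ => projNorm3_tensor_le p q r _ _
    _ = ∑ ε : Fin n → Bool, projNorm2 p q (M ε) * ((n:ℝ) ^ ((1/r).toReal)) := by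
        exact Finset.sum_congr rfl fun ε _ => by rw [pnorm_sign r hr hn ε]
    _ = (n:ℝ) ^ ((1/r).toReal) * ∑ ε : Fin n → Bool, projNorm2 p q (M ε) := by
        rw [Finset.mul_sum]
        exact Finset.sum_congr rfl fun ε _ => by ring
    _ ≤ (n:ℝ) ^ ((1/r).toReal) * ∑ ε : Fin n → Bool, idNorm2 p q n * l2norm2 (M ε) := by
        refine mul_le_mul_of_nonneg_left ?_ hpow
        exact Finset.sum_le_sum fun ε _ => projNorm2_le_idNorm2 p q hp hq _
    _ = (n:ℝ) ^ ((1/r).toReal) * (idNorm2 p q n * ∑ ε : Fin n → Bool, l2norm2 (M ε)) := by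
        simp only [Finset.mul_sum]
    _ ≤ (n:ℝ) ^ ((1/r).toReal) * (idNorm2 p q n * l2norm3 A) := by
        refine mul_le_mul_of_nonneg_left (mul_le_mul_of_nonneg_left hMl2 hD) hpow

theorem stmt11 (n : ℕ) (p q r : ℝ≥0∞) (hp : 1 ≤ p) (hq : 1 ≤ q) (hr : 1 ≤ r) :
    idNorm3 p q r n ≤ (n : ℝ) ^ (min (1 / r).toReal (1 / 2)) * idNorm2 p q n := by
  have hD := idNorm2_nonneg p q hp hq n
  have hpow : (0:ℝ) ≤ (n:ℝ) ^ (min (1/r).toReal (1/2)) :=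
    Real.rpow_nonneg (Nat.cast_nonneg n) _
  refine Real.sSup_le ?_ (mul_nonneg hpow hD)
  rintro t ⟨A, hA, rfl⟩
  rcases Nat.eq_zero_or_pos n with hn0 | hn
  · subst hn0
    have h0 : projNorm3 p q r A ≤ 0 := by
      have := projNorm3_le_of p q r A (fun s : Fin 0 => s.elim0) (fun s : Fin 0 => s.elim0)
        (fun s : Fin 0 => s.elim0) (fun i => i.elim0)
      simpa using this
    exact h0.trans (mul_nonneg hpow hD)
  · have hl2 : l2norm3 A ≤ 1 := hA
    rcases le_total ((1/r).toReal) ((1:ℝ)/2) with hmin | hmin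
    · rw [min_eq_left hmin]
      calc projNorm3 p q r A ≤ (n:ℝ)^((1/r).toReal) * (idNorm2 p q n * l2norm3 A) :=
            key_r p q r hp hq hr hn A
        _ ≤ (n:ℝ)^((1/r).toReal) * (idNorm2 p q n * 1) :=
            mul_le_mul_of_nonneg_left (mul_le_mul_of_nonneg_left hl2 hD)
              (Real.rpow_nonneg (Nat.cast_nonneg n) _)
        _ = (n:ℝ)^((1/r).toReal) * idNorm2 p q n := by rw [mul_one]
    · rw [min_eq_right hmin]
      calc projNorm3 p q r A ≤ Real.sqrt n * (idNorm2 p q n * l2norm3 A) :=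
            key_half p q r hp hq hr A
        _ ≤ Real.sqrt n * (idNorm2 p q n * 1) :=
            mul_le_mul_of_nonneg_left (mul_le_mul_of_nonneg_left hl2 hD) (Real.sqrt_nonneg _)
        _ = (n:ℝ)^((1:ℝ)/2) * idNorm2 p q n := by
            rw [mul_one, Real.sqrt_eq_rpow]
end
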